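/- arXiv:2111.11038 — 6 statements merged into one kernel-verified Lean document; each statement's English description precedes it below -/
import Mathlib

section
/- Fix reals N > 0, B > 0, define f(x) = N·(2^(x/B) − 1) and g(x) = f(x) − x·f'(x) where f'(x) = (N·ln 2/B)·2^(x/B). Then g(0) = 0, and g is strictly antitone (strictly decreasing) on the interval [0, ∞); in particular g(x) < 0 for all x > 0. -/
/-- With `N, B > 0`, `f x = N * (2 ^ (x / B) - 1)`,
`f' x = (N * log 2 / B) * 2 ^ (x / B)` and `g x = f x - x * f' x`:
`g 0 = 0`, `g` is strictly decreasing on `[0, ∞)`, and `g x < 0` for all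
`x > 0`. -/
theorem stmt_7 (N B : ℝ) (hN : 0 < N) (hB : 0 < B)
    (f f' g : ℝ → ℝ)
    (hf : ∀ x, f x = N * ((2 : ℝ) ^ (x / B) - 1))
    (hf' : ∀ x, f' x = (N * Real.log 2 / B) * (2 : ℝ) ^ (x / B))
    (hg : ∀ x, g x = f x - x * f' x) :
    g 0 = 0 ∧ StrictAntiOn g (Set.Ici 0) ∧ ∀ x : ℝ, 0 < x → g x < 0 := by
  set c : ℝ := Real.log 2 / B with hc
  have hc0 : 0 < c := div_pos (Real.log_pos (by norm_num)) hB
  have hpow : ∀ x : ℝ, (2 : ℝ) ^ (x / B) = Real.exp (c * x) := by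
    intro x
    rw [Real.rpow_def_of_pos (by norm_num)]
    ring_nf
    congr 1; rw [hc]; ring
  have hgG : ∀ x : ℝ, g x = N * Real.exp (c * x) - N - N * c * (x * Real.exp (c * x)) := by
    intro x
    rw [hg, hf, hf', hpow]
    ring
  have hg0 : g 0 = 0 := by rw [hgG]; simp
  have hderiv : ∀ x : ℝ, HasDerivAt g (-(N * c ^ 2) * (x * Real.exp (c * x))) x := by
    intro x
    have he : HasDerivAt (fun x : ℝ => Real.exp (c * x)) (c * Real.exp (c * x)) x := by
      simpa [mul_comm] using ((hasDerivAt_id x).const_mul c).exp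
    have h1 : HasDerivAt (fun x : ℝ => x * Real.exp (c * x))
        (1 * Real.exp (c * x) + x * (c * Real.exp (c * x))) x :=
      (hasDerivAt_id x).mul he
    have h2 : HasDerivAt (fun x : ℝ => N * Real.exp (c * x) - N - N * c * (x * Real.exp (c * x)))
        (N * (c * Real.exp (c * x)) - 0 -
          N * c * (1 * Real.exp (c * x) + x * (c * Real.exp (c * x)))) x :=
      ((he.const_mul N).sub (hasDerivAt_const x N)).sub (h1.const_mul (N * c))
    have : HasDerivAt g (N * (c * Real.exp (c * x)) - 0 -
        N * c * (1 * Real.exp (c * x) + x * (c * Real.exp (c * x)))) x := by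
      apply h2.congr_of_eventuallyEq
      filter_upwards with y using (hgG y)
    convert this using 1
    ring
  have hanti : StrictAntiOn g (Set.Ici 0) := by
    apply StrictAntiOn.mono (s := Set.Ici (0 : ℝ)) ?_ le_rfl
    apply strictAntiOn_of_deriv_neg (convex_Ici 0)
    · exact Continuous.continuousOn (by
        have : Continuous fun x : ℝ => N * Real.exp (c * x) - N - N * c * (x * Real.exp (c * x)) :=
          by continuity
        exact this.congr fun x => (hgG x).symm)
    · intro x hx
      rw [interior_Ici] at hx
      rw [(hderiv x).deriv]
      have hxp : 0 < x := hx
      have h3 : 0 < N * c ^ 2 := by positivity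
      have := mul_pos h3 (mul_pos hxp (Real.exp_pos (c * x)))
      linarith
  refine ⟨hg0, hanti, fun x hx => ?_⟩
  have := hanti (Set.self_mem_Ici) (le_of_lt hx : (0:ℝ) ≤ x) hx
  rwa [hg0] at this
end

section
/- Fix reals N > 0, B > 0, define f(x) = N·(2^(x/B) − 1) and g(x) = f(x) − x·f'(x) where f'(x) = (N·ln 2/B)·2^(x/B). Then g restricted to [0, ∞) is a bijection from [0, ∞) onto (−∞, 0]; in particular, for every y ≤ 0 there is a unique x ≥ 0 with g(x) = y, and this inverse map y ↦ g^{-1}(y) is strictly antitone on (−∞, 0]. -/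
/-- With `N, B > 0`, `f x = N * (2 ^ (x / B) - 1)`,
`f' x = (N * log 2 / B) * 2 ^ (x / B)` and `g x = f x - x * f' x`:
`g` restricted to `[0, ∞)` is a bijection onto `(-∞, 0]`; in particular, for
every `y ≤ 0` there is a unique `x ≥ 0` with `g x = y`, and the inverse map
`g⁻¹` is strictly antitone on `(-∞, 0]`. -/
theorem stmt_8 (N B : ℝ) (hN : 0 < N) (hB : 0 < B)
    (f f' g : ℝ → ℝ)
    (hf : ∀ x, f x = N * ((2 : ℝ) ^ (x / B) - 1))
    (hf' : ∀ x, f' x = (N * Real.log 2 / B) * (2 : ℝ) ^ (x / B))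
    (hg : ∀ x, g x = f x - x * f' x) :
    Set.BijOn g (Set.Ici 0) (Set.Iic 0) ∧
    (∀ y : ℝ, y ≤ 0 → ∃! x : ℝ, x ∈ Set.Ici (0 : ℝ) ∧ g x = y) ∧
    StrictAntiOn (Function.invFunOn g (Set.Ici 0)) (Set.Iic 0) := by
  set c : ℝ := Real.log 2 / B with hcdef
  have hc : 0 < c := div_pos (Real.log_pos one_lt_two) hB
  -- rewrite g in exponential form
  have hgexp : ∀ x, g x = N * (Real.exp (c * x) - 1 - c * x * Real.exp (c * x)) := by
    intro x
    have h2 : (2 : ℝ) ^ (x / B) = Real.exp (c * x) := by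
      rw [Real.rpow_def_of_pos two_pos]
      congr 1
      rw [hcdef]; ring
    rw [hg, hf, hf', h2, hcdef]
    field_simp
  have hgfun : g = fun x => N * (Real.exp (c * x) - 1 - c * x * Real.exp (c * x)) :=
    funext hgexp
  -- derivative
  have hderiv : ∀ x : ℝ, HasDerivAt g (-(N * c ^ 2 * x * Real.exp (c * x))) x := by
    intro x
    rw [hgfun]
    have h1 : HasDerivAt (fun y : ℝ => c * y) c x := by
      simpa using (hasDerivAt_id x).const_mul c
    have hE : HasDerivAt (fun y : ℝ => Real.exp (c * y)) (Real.exp (c * x) * c) x := h1.exp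
    have := (((hE.sub_const 1).sub (h1.mul hE)).const_mul N)
    exact this.congr_deriv (by ring)
  have hdg : ∀ x : ℝ, deriv g x = -(N * c ^ 2 * x * Real.exp (c * x)) :=
    fun x => (hderiv x).deriv
  have hcont : ContinuousOn g (Set.Ici 0) :=
    fun x _ => ((hderiv x).differentiableAt).continuousAt.continuousWithinAt
  have hanti : StrictAntiOn g (Set.Ici 0) := by
    apply strictAntiOn_of_deriv_neg (convex_Ici 0) hcont
    intro x hx
    rw [interior_Ici] at hx
    have hx' : (0:ℝ) < x := hx
    rw [hdg]
    have : 0 < N * c ^ 2 * x * Real.exp (c * x) := by positivity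
    linarith
  have hg0 : g 0 = 0 := by rw [hgexp]; simp
  -- surjectivity
  have hsurj : Set.SurjOn g (Set.Ici 0) (Set.Iic 0) := by
    intro y hy
    have hy' : y ≤ 0 := hy
    set x₀ : ℝ := (2 - y / N) / c with hx₀def
    have hyN : y / N ≤ 0 := div_nonpos_of_nonpos_of_nonneg hy' hN.le
    have hcx₀ : c * x₀ = 2 - y / N := by rw [hx₀def]; field_simp
    have hx₀pos : 0 ≤ x₀ := by
      apply div_nonneg _ hc.le; linarith
    have hEge : 1 + c * x₀ ≤ Real.exp (c * x₀) := by linarith [Real.add_one_le_exp (c * x₀)]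
    have hgx₀ : g x₀ ≤ y := by
      rw [hgexp]
      have h2 : (2 : ℝ) ≤ c * x₀ := by rw [hcx₀]; linarith
      have hyn : y / N * N = y := by field_simp
      have h3N : 0 ≤ N * ((Real.exp (c * x₀) - 1 - c * x₀) * (c * x₀ - 1)) :=
        mul_nonneg hN.le (mul_nonneg (by linarith) (by linarith))
      have h4 : 0 ≤ N * (c * x₀) ^ 2 + y := by
        rw [hcx₀]
        nlinarith [mul_nonneg (sq_nonneg (y / N)) hN.le]
      nlinarith [h3N, h4]
    have : y ∈ Set.Icc (g x₀) (g 0) := ⟨hgx₀, by rw [hg0]; exact hy'⟩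
    obtain ⟨x, hx, hgx⟩ := intermediate_value_Icc' hx₀pos (hcont.mono (by
      intro z hz; exact hz.1)) this
    exact ⟨x, hx.1, hgx⟩
  have hmaps : Set.MapsTo g (Set.Ici 0) (Set.Iic 0) := by
    intro x hx
    have hx0 : (0:ℝ) ≤ x := hx
    rcases eq_or_lt_of_le hx0 with h | h
    · simp [← h, hg0]
    · have := hanti (Set.self_mem_Ici) hx h
      rw [hg0] at this
      exact le_of_lt this
  have hbij : Set.BijOn g (Set.Ici 0) (Set.Iic 0) :=
    ⟨hmaps, hanti.injOn, hsurj⟩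
  refine ⟨hbij, ?_, ?_⟩
  · intro y hy
    obtain ⟨x, hx, hgx⟩ := hsurj hy
    exact ⟨x, ⟨hx, hgx⟩, fun z ⟨hz, hgz⟩ => hanti.injOn hz hx (hgz.trans hgx.symm)⟩
  · intro y₁ hy₁ y₂ hy₂ hlt
    obtain ⟨a₁, ha₁, hga₁⟩ := hsurj hy₁
    obtain ⟨a₂, ha₂, hga₂⟩ := hsurj hy₂
    have e₁ : ∃ a ∈ Set.Ici (0:ℝ), g a = y₁ := ⟨a₁, ha₁, hga₁⟩
    have e₂ : ∃ a ∈ Set.Ici (0:ℝ), g a = y₂ := ⟨a₂, ha₂, hga₂⟩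
    have m₁ := Function.invFunOn_mem e₁
    have m₂ := Function.invFunOn_mem e₂
    have q₁ := Function.invFunOn_eq e₁
    have q₂ := Function.invFunOn_eq e₂
    by_contra hle
    push_neg at hle
    rcases eq_or_lt_of_le hle with h | h
    · rw [← q₁, ← q₂, h] at hlt; exact lt_irrefl _ hlt
    · have := hanti m₁ m₂ h
      rw [q₁, q₂] at this
      exact absurd hlt (not_lt.2 this.le)
end

section
/- Fix reals N > 0, B > 0, h > 0 and d > 0, and let f(x) = N·(2^(x/B) − 1). Then the transmission-energy function t ↦ (t/h)·f(d/t) is strictly antitone (strictly decreasing) on (0, ∞). -/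
/-- Key convexity inequality: for `0 < u < v`,
`v * (2^u - 1) < u * (2^v - 1)`. -/
lemma key_ineq (u v : ℝ) (hu : 0 < u) (huv : u < v) :
    v * ((2 : ℝ) ^ u - 1) < u * ((2 : ℝ) ^ v - 1) := by
  have hv : 0 < v := hu.trans huv
  have hlog : 0 < Real.log 2 := Real.log_pos (by norm_num)
  have ha : (0:ℝ) < 1 - u / v := by
    rw [sub_pos]; exact (div_lt_one hv).mpr huv
  have hb : (0:ℝ) < u / v := by positivity
  have hab : (1 - u / v) + u / v = 1 := by ring
  have hne : (0:ℝ) ≠ v * Real.log 2 := ne_of_lt (by positivity)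
  have hconv := strictConvexOn_exp.2 (Set.mem_univ (0:ℝ))
    (Set.mem_univ (v * Real.log 2)) hne ha hb hab
  simp only [smul_eq_mul, mul_zero, zero_add, Real.exp_zero, mul_one] at hconv
  have h1 : u / v * (v * Real.log 2) = u * Real.log 2 := by
    field_simp
  rw [h1] at hconv
  have e2u : (2 : ℝ) ^ u = Real.exp (u * Real.log 2) := by
    rw [Real.rpow_def_of_pos (by norm_num), mul_comm]
  have e2v : (2 : ℝ) ^ v = Real.exp (v * Real.log 2) := by
    rw [Real.rpow_def_of_pos (by norm_num), mul_comm]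
  rw [← e2u, ← e2v] at hconv
  have h3 := mul_lt_mul_of_pos_left hconv hv
  have h4 : v * (1 - u / v + u / v * (2:ℝ) ^ v) = v - u + u * (2:ℝ) ^ v := by
    field_simp
  rw [h4] at h3
  nlinarith [h3]

/-- With `N, B, h > 0` and `d > 0`, and
`f x = N * (2 ^ (x / B) - 1)`, the transmission-energy function
`t ↦ (t / h) * f (d / t)` is strictly decreasing on `(0, ∞)`. -/
theorem stmt_10 (N B h d : ℝ) (hN : 0 < N) (hB : 0 < B) (hh : 0 < h)
    (hd : 0 < d) :
    StrictAntiOn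
      (fun t : ℝ => (t / h) * (N * ((2 : ℝ) ^ ((d / t) / B) - 1)))
      (Set.Ioi 0) := by
  intro t2 ht2 t1 ht1 hlt
  simp only [Set.mem_Ioi] at ht1 ht2
  set u : ℝ := d / t1 / B with hu_def
  set v : ℝ := d / t2 / B with hv_def
  have hu : 0 < u := by positivity
  have hv : 0 < v := by positivity
  have huv : u < v :=
    div_lt_div_of_pos_right (div_lt_div_of_pos_left hd ht2 hlt) hB
  have key := key_ineq u v hu huv
  have ht1u : t1 * (B * u) = d := by
    rw [hu_def]; field_simp
  have ht2v : t2 * (B * v) = d := by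
    rw [hv_def]; field_simp
  have hpos : (0:ℝ) < B * u * v := by positivity
  have h1 : t1 * ((2:ℝ) ^ u - 1) * (B * u * v) = d * (v * ((2:ℝ) ^ u - 1)) := by
    linear_combination (v * ((2:ℝ) ^ u - 1)) * ht1u
  have h2 : t2 * ((2:ℝ) ^ v - 1) * (B * u * v) = d * (u * ((2:ℝ) ^ v - 1)) := by
    linear_combination (u * ((2:ℝ) ^ v - 1)) * ht2v
  have hmul : t1 * ((2:ℝ) ^ u - 1) * (B * u * v)
      < t2 * ((2:ℝ) ^ v - 1) * (B * u * v) := by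
    rw [h1, h2]; exact mul_lt_mul_of_pos_left key hd
  have hmain : t1 * ((2:ℝ) ^ u - 1) < t2 * ((2:ℝ) ^ v - 1) :=
    lt_of_mul_lt_mul_right hmul hpos.le
  have hNh : 0 < N / h := by positivity
  show t1 / h * (N * ((2:ℝ) ^ u - 1)) < t2 / h * (N * ((2:ℝ) ^ v - 1))
  calc t1 / h * (N * ((2:ℝ) ^ u - 1))
      = (N / h) * (t1 * ((2:ℝ) ^ u - 1)) := by ring
    _ < (N / h) * (t2 * ((2:ℝ) ^ v - 1)) := mul_lt_mul_of_pos_left hmain hNh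
    _ = t2 / h * (N * ((2:ℝ) ^ v - 1)) := by ring
end

section
/- Fix reals N > 0, B > 0, h > 0, C > 0, p > 0 and let f(x) = N·(2^(x/B) − 1). If the priority indicator O = B·h·C·p/(N·ln 2) satisfies O ≤ 1, then for every d ≥ 0 and every t > 0, (t/h)·f(d/t) ≥ C·p·d; i.e., the transmission energy for offloading d bits in any time t is at least the local-computation energy C·p·d for those bits. -/
/-- With `N, B, h, C, p > 0` and `f x = N * (2 ^ (x / B) - 1)`:
if the priority indicator `O = B * h * C * p / (N * log 2)` satisfies `O ≤ 1`,
then for every `d ≥ 0` and every `t > 0`,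
`(t / h) * f (d / t) ≥ C * p * d`, i.e. the transmission energy for offloading
`d` bits in any time `t` is at least the local-computation energy `C * p * d`. -/
theorem stmt_12 (N B h C p : ℝ) (hN : 0 < N) (hB : 0 < B) (hh : 0 < h)
    (hC : 0 < C) (hp : 0 < p)
    (hO : B * h * C * p / (N * Real.log 2) ≤ 1) :
    ∀ d : ℝ, 0 ≤ d → ∀ t : ℝ, 0 < t →
      C * p * d ≤ (t / h) * (N * ((2 : ℝ) ^ ((d / t) / B) - 1)) := by
  intro d hd t ht
  have hlog : 0 < Real.log 2 := Real.log_pos (by norm_num)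
  set x : ℝ := d / t / B with hx
  have hxe : (2 : ℝ) ^ x = Real.exp (Real.log 2 * x) :=
    Real.rpow_def_of_pos (by norm_num) x
  have hexp : Real.log 2 * x + 1 ≤ Real.exp (Real.log 2 * x) :=
    Real.add_one_le_exp _
  have h1 : Real.log 2 * x ≤ (2 : ℝ) ^ x - 1 := by rw [hxe]; linarith
  -- from hO : B*h*C*p ≤ N * log 2
  have hO' : B * h * C * p ≤ N * Real.log 2 := by
    have := (div_le_one (by positivity : (0:ℝ) < N * Real.log 2)).mp hO
    linarith
  have hxval : x = d / (t * B) := by rw [hx, div_div]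
  have key : C * p * d ≤ (t / h) * (N * (Real.log 2 * x)) := by
    rw [hxval]
    rw [show t / h * (N * (Real.log 2 * (d / (t * B)))) = d / (h * B) * (N * Real.log 2) by
      field_simp]
    rw [show C * p * d = d / (h * B) * (B * h * C * p) by field_simp]
    have hdn : 0 ≤ d / (h * B) := by positivity
    exact mul_le_mul_of_nonneg_left hO' hdn
  have h2 : (t / h) * (N * (Real.log 2 * x)) ≤ (t / h) * (N * ((2:ℝ) ^ x - 1)) := by
    have : 0 ≤ t / h := le_of_lt (by positivity)
    gcongr
  linarith
end

section
/- Fix reals N > 0, B > 0, h > 0, C > 0, p > 0, T > 0, D > 0 and G with 0 ≤ G ≤ D; let f(x) = N·(2^(x/B) − 1) and f'(x) = (N·ln 2/B)·2^(x/B). Define F(d) = (T/h)·f(d/T) + (D − d)·C·p for d ∈ [G, D]. If f'(G/T) ≥ C·p·h, then F(G) ≤ F(d) for all d ∈ [G, D]; i.e., offloading only the minimum required amount G minimizes the total (transmission plus local-computation) energy. -/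
lemma key_exp (x y : ℝ) (hyx : y ≤ x) :
    Real.log 2 * (x - y) * (2 : ℝ) ^ y ≤ (2 : ℝ) ^ x - (2 : ℝ) ^ y := by
  rw [Real.rpow_def_of_pos two_pos, Real.rpow_def_of_pos two_pos]
  set a := Real.log 2 * x
  set b := Real.log 2 * y
  have h1 : a - b + 1 ≤ Real.exp (a - b) := Real.add_one_le_exp _
  have h2 : Real.exp (a - b) * Real.exp b = Real.exp a := by
    rw [← Real.exp_add]; ring_nf
  have h3 : (0:ℝ) < Real.exp b := Real.exp_pos b
  have hab : a - b = Real.log 2 * (x - y) := by simp [a, b]; ring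
  nlinarith [h1, h2, h3]

/-- With `N, B, h, C, p, T, D > 0`, `0 ≤ G ≤ D`,
`f x = N * (2 ^ (x / B) - 1)`, `f' x = (N * log 2 / B) * 2 ^ (x / B)`, and the
total-energy function `F d = (T / h) * f (d / T) + (D - d) * C * p` on
`[G, D]`: if `f' (G / T) ≥ C * p * h`, then `F G ≤ F d` for all `d ∈ [G, D]`,
i.e. offloading only the minimum required amount `G` minimizes the total
energy. -/
theorem stmt_13 (N B h C p T D G : ℝ) (hN : 0 < N) (hB : 0 < B) (hh : 0 < h)
    (hC : 0 < C) (hp : 0 < p) (hT : 0 < T) (hD : 0 < D)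
    (hG0 : 0 ≤ G) (hGD : G ≤ D)
    (f f' : ℝ → ℝ)
    (hf : ∀ x, f x = N * ((2 : ℝ) ^ (x / B) - 1))
    (hf' : ∀ x, f' x = (N * Real.log 2 / B) * (2 : ℝ) ^ (x / B))
    (F : ℝ → ℝ)
    (hF : ∀ d, F d = (T / h) * f (d / T) + (D - d) * C * p)
    (hcrit : C * p * h ≤ f' (G / T)) :
    ∀ d ∈ Set.Icc G D, F G ≤ F d := by
  intro d hd
  obtain ⟨hGd, hdD⟩ := hd
  rw [hF, hF, hf, hf]
  rw [hf'] at hcrit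
  set x := d / T / B with hxdef
  set y := G / T / B with hydef
  have hyx : y ≤ x := by
    show G / T / B ≤ d / T / B
    gcongr
  have hkey := key_exp x y hyx
  have hxy : x - y = (d - G) / (T * B) := by
    rw [hxdef, hydef, div_div, div_div, ← sub_div]
  -- C*p*(d-G) ≤ (N*log2/B)*2^y*(d-G)/h
  have hmul := mul_le_mul_of_nonneg_right hcrit
    (div_nonneg (sub_nonneg.2 hGd) hh.le)
  have hCp : C * p * h * ((d - G) / h) = C * p * (d - G) := by
    field_simp
  rw [hCp] at hmul
  have h2y : (0:ℝ) < (2:ℝ) ^ y := Real.rpow_pos_of_pos two_pos y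
  have hTh : (0:ℝ) < T / h := div_pos hT hh
  -- multiply key by (T/h)*N ≥ 0
  have hkey2 := mul_le_mul_of_nonneg_left hkey (by positivity : (0:ℝ) ≤ T / h * N)
  have heq : T / h * N * (Real.log 2 * (x - y) * (2:ℝ) ^ y)
      = N * Real.log 2 / B * (2:ℝ) ^ y * ((d - G) / h) := by
    rw [hxy]; field_simp
  rw [heq] at hkey2
  nlinarith [hkey2, hmul]
end

section
/- Fix reals N > 0, B > 0, h > 0, C > 0, p > 0, T > 0, D > 0 and G with 0 ≤ G ≤ D; let f(x) = N·(2^(x/B) − 1) and f'(x) = (N·ln 2/B)·2^(x/B). Define F(d) = (T/h)·f(d/T) + (D − d)·C·p for d ∈ [G, D]. If f'(D/T) ≤ C·p·h, then F(D) ≤ F(d) for all d ∈ [G, D]; i.e., offloading all collected data D minimizes the total (transmission plus local-computation) energy. -/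
/-- With `N, B, h, C, p, T, D > 0`, `0 ≤ G ≤ D`,
`f x = N * (2 ^ (x / B) - 1)`, `f' x = (N * log 2 / B) * 2 ^ (x / B)`, and the
total-energy function `F d = (T / h) * f (d / T) + (D - d) * C * p` on
`[G, D]`: if `f' (D / T) ≤ C * p * h`, then `F D ≤ F d` for all `d ∈ [G, D]`,
i.e. offloading all collected data `D` minimizes the total energy. -/
theorem stmt_14 (N B h C p T D G : ℝ) (hN : 0 < N) (hB : 0 < B) (hh : 0 < h)
    (hC : 0 < C) (hp : 0 < p) (hT : 0 < T) (hD : 0 < D)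
    (hG0 : 0 ≤ G) (hGD : G ≤ D)
    (f f' : ℝ → ℝ)
    (hf : ∀ x, f x = N * ((2 : ℝ) ^ (x / B) - 1))
    (hf' : ∀ x, f' x = (N * Real.log 2 / B) * (2 : ℝ) ^ (x / B))
    (F : ℝ → ℝ)
    (hF : ∀ d, F d = (T / h) * f (d / T) + (D - d) * C * p)
    (hcrit : f' (D / T) ≤ C * p * h) :
    ∀ d ∈ Set.Icc G D, F D ≤ F d := by
  have hFe : F = fun d => (T / h) * (N * ((2 : ℝ) ^ (d / T / B) - 1)) + (D - d) * C * p := by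
    funext d; rw [hF, hf]
  -- derivative of F at x
  have hderiv : ∀ x : ℝ, HasDerivAt F
      ((T / h) * (N * ((2 : ℝ) ^ (x / T / B) * Real.log 2 * (1 / T / B))) - C * p) x := by
    intro x
    rw [hFe]
    have hinner : HasDerivAt (fun y : ℝ => y / T / B) (1 / T / B) x :=
      ((hasDerivAt_id x).div_const T).div_const B
    have h2 : HasDerivAt (fun y : ℝ => (2 : ℝ) ^ (y / T / B))
        ((2 : ℝ) ^ (x / T / B) * Real.log 2 * (1 / T / B)) x := by
      have := ((Real.hasStrictDerivAt_const_rpow (by norm_num : (0:ℝ) < 2)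
        (x / T / B)).hasDerivAt).comp x hinner
      exact this
    have h3 : HasDerivAt (fun y : ℝ => (T / h) * (N * ((2 : ℝ) ^ (y / T / B) - 1)))
        ((T / h) * (N * ((2 : ℝ) ^ (x / T / B) * Real.log 2 * (1 / T / B)))) x :=
      (((h2.sub_const 1).const_mul N).const_mul (T / h))
    have h4 : HasDerivAt (fun y : ℝ => (D - y) * C * p) (-(C * p)) x := by
      have h5 : HasDerivAt (fun y : ℝ => (D - y) * C * p) ((0 - 1) * C * p) x :=
        (((hasDerivAt_const x D).sub (hasDerivAt_id x)).mul_const C).mul_const p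
      convert h5 using 1; ring
    have := h3.add h4
    exact this.congr_deriv (by ring)
  -- the derivative is nonpositive on [G, D]
  have hlog2 : 0 < Real.log 2 := Real.log_pos (by norm_num)
  have hanti : AntitoneOn F (Set.Icc G D) := by
    apply antitoneOn_of_deriv_nonpos (convex_Icc G D)
    · exact fun x _ => ((hderiv x).differentiableAt.continuousAt).continuousWithinAt
    · intro x hx
      exact (hderiv x).differentiableAt.differentiableWithinAt
    · intro x hx
      rw [(hderiv x).deriv]
      rw [interior_Icc] at hx
      have hxD : x ≤ D := le_of_lt hx.2
      have hpow : (2 : ℝ) ^ (x / T / B) ≤ (2 : ℝ) ^ (D / T / B) := by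
        apply Real.rpow_le_rpow_of_exponent_le one_le_two
        gcongr
      have hkey : (N * Real.log 2 / B) * (2 : ℝ) ^ (D / T / B) ≤ C * p * h := by
        have := hcrit; rw [hf'] at this; exact this
      have hc : (T / h) * (N * ((2 : ℝ) ^ (x / T / B) * Real.log 2 * (1 / T / B)))
          = (N * Real.log 2 / B) * (2 : ℝ) ^ (x / T / B) / h := by
        field_simp
      rw [hc]
      rw [sub_nonpos, div_le_iff₀ hh]
      calc (N * Real.log 2 / B) * (2 : ℝ) ^ (x / T / B)
          ≤ (N * Real.log 2 / B) * (2 : ℝ) ^ (D / T / B) := by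
            apply mul_le_mul_of_nonneg_left hpow
            positivity
        _ ≤ C * p * h := hkey
  intro d hd
  exact hanti hd (Set.right_mem_Icc.mpr hGD) hd.2
end
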